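/- arXiv:1310.4387 — 2 statements merged into one kernel-verified Lean document; each statement's English description precedes it below -/
import Mathlib

section
/- Let B, β_mh, β_hm, μ_h, η_h, μ_m, φ, μ_A, η_A, k, N_h be positive real numbers with φ·η_A ≥ (η_A + μ_A)·μ_m, and let S_m* = (η_A/μ_m)·(1 − (η_A + μ_A)·μ_m/(φ·η_A))·k·N_h. Then the next-generation matrix M = ![![0, B·β_mh/μ_m], ![B·β_hm·S_m*/((η_h + μ_h)·N_h), 0]] (a 2×2 real matrix) has characteristic-polynomial roots exactly ±R_0, and consequently its spectral radius equals R_0, where R_0 = sqrt( k·B²·β_hm·β_mh·(φ·η_A − η_A·μ_m − μ_A·μ_m) / (φ·(η_h + μ_h)·μ_m²) ). -/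
/-- The next-generation matrix of the dengue model without vaccination has
characteristic-polynomial roots exactly `±R₀`, hence spectral radius `R₀`. -/
theorem next_generation_matrix_spectral_radius
    (B βmh βhm μh ηh μm φ μA ηA k Nh : ℝ)
    (hB : 0 < B) (hβmh : 0 < βmh) (hβhm : 0 < βhm) (hμh : 0 < μh)
    (hηh : 0 < ηh) (hμm : 0 < μm) (hφ : 0 < φ) (hμA : 0 < μA)
    (hηA : 0 < ηA) (hk : 0 < k) (hNh : 0 < Nh)
    (hcond : φ * ηA ≥ (ηA + μA) * μm) :
    let Sm : ℝ := (ηA / μm) * (1 - (ηA + μA) * μm / (φ * ηA)) * k * Nh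
    let R0 : ℝ := Real.sqrt (k * B ^ 2 * βhm * βmh *
      (φ * ηA - ηA * μm - μA * μm) / (φ * (ηh + μh) * μm ^ 2))
    let M : Matrix (Fin 2) (Fin 2) ℝ :=
      ![![0, B * βmh / μm], ![B * βhm * Sm / ((ηh + μh) * Nh), 0]]
    (∀ x : ℝ, M.charpoly.IsRoot x ↔ x = R0 ∨ x = -R0) ∧
    IsGreatest {r : ℝ | ∃ x : ℝ, M.charpoly.IsRoot x ∧ r = |x|} R0 := by
  intro Sm R0 M
  set arg : ℝ := k * B ^ 2 * βhm * βmh *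
      (φ * ηA - ηA * μm - μA * μm) / (φ * (ηh + μh) * μm ^ 2) with harg
  have hargnn : 0 ≤ arg := by
    apply div_nonneg
    · have : 0 ≤ φ * ηA - ηA * μm - μA * μm := by nlinarith
      positivity
    · positivity
  have hR0nn : 0 ≤ R0 := Real.sqrt_nonneg _
  have hR0sq : R0 ^ 2 = arg := Real.sq_sqrt hargnn
  -- compute the product of off-diagonal entries
  have hprod : (B * βmh / μm) * (B * βhm * Sm / ((ηh + μh) * Nh)) = arg := by
    show (B * βmh / μm) *
        (B * βhm * ((ηA / μm) * (1 - (ηA + μA) * μm / (φ * ηA)) * k * Nh) /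
          ((ηh + μh) * Nh)) = arg
    rw [harg]
    field_simp
    ring
  have hcp : M.charpoly = Polynomial.X ^ 2 - Polynomial.C arg := by
    rw [Matrix.charpoly, Matrix.det_fin_two, Matrix.charmatrix_apply_eq,
      Matrix.charmatrix_apply_eq,
      Matrix.charmatrix_apply_ne _ _ _ (by decide : (0 : Fin 2) ≠ 1),
      Matrix.charmatrix_apply_ne _ _ _ (by decide : (1 : Fin 2) ≠ 0)]
    have h00 : M 0 0 = 0 := rfl
    have h11 : M 1 1 = 0 := rfl
    have h01 : M 0 1 = B * βmh / μm := rfl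
    have h10 : M 1 0 = B * βhm * Sm / ((ηh + μh) * Nh) := rfl
    rw [h00, h11, h01, h10, ← hprod]
    simp only [map_mul, map_zero]
    ring
  have hroot : ∀ x : ℝ, M.charpoly.IsRoot x ↔ x = R0 ∨ x = -R0 := by
    intro x
    rw [hcp, Polynomial.IsRoot]
    simp only [Polynomial.eval_sub, Polynomial.eval_pow, Polynomial.eval_X,
      Polynomial.eval_C]
    constructor
    · intro h
      have hx2 : x ^ 2 = R0 ^ 2 := by rw [hR0sq]; linarith
      rcases sq_eq_sq_iff_eq_or_eq_neg.mp hx2 with h1 | h1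
      · exact Or.inl h1
      · exact Or.inr h1
    · rintro (rfl | rfl) <;> rw [← hR0sq] <;> ring
  refine ⟨hroot, ?_, ?_⟩
  · exact ⟨R0, (hroot R0).mpr (Or.inl rfl), (abs_of_nonneg hR0nn).symm⟩
  · rintro r ⟨x, hx, rfl⟩
    rcases (hroot x).mp hx with rfl | rfl
    · rw [abs_of_nonneg hR0nn]
    · rw [abs_neg, abs_of_nonneg hR0nn]
end

section
/- Let B, β_mh, β_hm, μ_h, η_h, μ_m, φ, μ_A, η_A, k, N_h be positive real numbers with φ·η_A > (η_A + μ_A)·μ_m, let S_m* = (η_A/μ_m)·(1 − (η_A + μ_A)·μ_m/(φ·η_A))·k·N_h, and let J be the 2×2 real matrix J = ![![−(η_h + μ_h), B·β_mh], ![B·β_hm·S_m*/N_h, −μ_m]] (the linearization of the infected subsystem (I_h, I_m) at the disease-free equilibrium without vaccination). Then trace(J) < 0 always, and det(J) > 0 if and only if R_0 < 1, where R_0 = sqrt( k·B²·β_hm·β_mh·(φ·η_A − η_A·μ_m − μ_A·μ_m) / (φ·(η_h + μ_h)·μ_m²) ). Consequently both roots of the characteristic polynomial of J have negative real part if and only if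 R_0 < 1. -/
open Polynomial

lemma quad_roots_neg_re (a d : ℝ) (ha : a < 0) :
    (∀ z : ℂ, z ^ 2 - (a : ℂ) * z + (d : ℂ) = 0 → z.re < 0) ↔ 0 < d := by
  constructor
  · intro h
    obtain ⟨s, hs⟩ := IsAlgClosed.exists_pow_nat_eq ((a : ℂ) ^ 2 - 4 * d) zero_lt_two
    have hr1 : (((a:ℂ) + s) / 2) ^ 2 - (a:ℂ) * (((a:ℂ) + s) / 2) + (d:ℂ) = 0 := by
      linear_combination hs / 4
    have hr2 : ((a:ℂ) - ((a:ℂ) + s) / 2) ^ 2 - (a:ℂ) * ((a:ℂ) - ((a:ℂ) + s) / 2) + (d:ℂ) = 0 := by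
      linear_combination hs / 4
    have hx1 := h _ hr1
    have hx2 := h _ hr2
    have hprod : (d : ℂ) = (((a:ℂ) + s) / 2) * ((a:ℂ) - ((a:ℂ) + s) / 2) := by
      linear_combination hr1
    have hre : d = (((a:ℂ) + s) / 2).re * ((a:ℂ) - ((a:ℂ) + s) / 2).re -
        (((a:ℂ) + s) / 2).im * ((a:ℂ) - ((a:ℂ) + s) / 2).im := by
      have := congrArg Complex.re hprod
      simpa [Complex.mul_re] using this
    have him2 : ((a:ℂ) - ((a:ℂ) + s) / 2).im = -((((a:ℂ) + s) / 2).im) := by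
      simp [Complex.sub_im]
    rw [him2] at hre
    nlinarith [sq_nonneg ((((a:ℂ) + s) / 2).im), mul_pos (neg_pos.mpr hx1) (neg_pos.mpr hx2)]
  · intro hd z hz
    have him := congrArg Complex.im hz
    have hre := congrArg Complex.re hz
    simp only [Complex.add_im, Complex.sub_im, Complex.mul_im, Complex.ofReal_im,
      Complex.ofReal_re, Complex.zero_im, Complex.zero_re, Complex.add_re,
      Complex.sub_re, Complex.mul_re, pow_two] at him hre
    have hIm : z.im * (2 * z.re - a) = 0 := by linear_combination him
    have hRe : z.re ^ 2 - z.im ^ 2 - a * z.re + d = 0 := by linear_combination hre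
    rcases mul_eq_zero.mp hIm with h0 | h0
    · -- z.im = 0
      by_contra hge
      push_neg at hge
      rw [h0] at hRe
      nlinarith
    · -- 2 re - a = 0
      have : z.re = a / 2 := by linarith
      rw [this]; linarith

/-- For the linearization `J` of the infected subsystem at the disease-free
equilibrium: `trace J < 0` always, `det J > 0 ↔ R₀ < 1`, and hence all roots
of the characteristic polynomial of `J` have negative real part iff `R₀ < 1`. -/
theorem dfe_linearization_stability
    (B βmh βhm μh ηh μm φ μA ηA k Nh : ℝ)
    (hB : 0 < B) (hβmh : 0 < βmh) (hβhm : 0 < βhm) (hμh : 0 < μh)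
    (hηh : 0 < ηh) (hμm : 0 < μm) (hφ : 0 < φ) (hμA : 0 < μA)
    (hηA : 0 < ηA) (hk : 0 < k) (hNh : 0 < Nh)
    (hcond : φ * ηA > (ηA + μA) * μm) :
    let Sm : ℝ := (ηA / μm) * (1 - (ηA + μA) * μm / (φ * ηA)) * k * Nh
    let R0 : ℝ := Real.sqrt (k * B ^ 2 * βhm * βmh *
      (φ * ηA - ηA * μm - μA * μm) / (φ * (ηh + μh) * μm ^ 2))
    let J : Matrix (Fin 2) (Fin 2) ℝ :=
      ![![-(ηh + μh), B * βmh], ![B * βhm * Sm / Nh, -μm]]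
    J.trace < 0 ∧
    (J.det > 0 ↔ R0 < 1) ∧
    ((∀ z : ℂ, (J.map (fun x : ℝ => (x : ℂ))).charpoly.IsRoot z → z.re < 0)
      ↔ R0 < 1) := by
  intro Sm R0 J
  set E : ℝ := k * B ^ 2 * βhm * βmh *
      (φ * ηA - ηA * μm - μA * μm) / (φ * (ηh + μh) * μm ^ 2) with hEdef
  have hnum : 0 < φ * ηA - ηA * μm - μA * μm := by nlinarith
  have hE0 : 0 ≤ E := by
    rw [hEdef]; positivity
  have hR0E : R0 < 1 ↔ E < 1 := by
    rw [show R0 = Real.sqrt E from rfl, Real.sqrt_lt' one_pos, one_pow]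
  have htr : J.trace = -(ηh + μh) + -μm := by
    rw [Matrix.trace_fin_two]
    simp [J, Matrix.trace_fin_two]
  have htr0 : J.trace < 0 := by rw [htr]; linarith
  have hdet : J.det = (ηh + μh) * μm * (1 - E) := by
    rw [Matrix.det_fin_two]
    simp only [J, Matrix.det_fin_two, Matrix.cons_val', Matrix.cons_val_zero,
      Matrix.cons_val_one, Matrix.head_cons, Matrix.head_fin_const,
      Matrix.empty_val', Matrix.cons_val_fin_one]
    rw [hEdef, show Sm = (ηA / μm) * (1 - (ηA + μA) * μm / (φ * ηA)) * k * Nh from rfl]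
    field_simp
    ring
  have hdetpos : J.det > 0 ↔ R0 < 1 := by
    rw [hdet, hR0E]
    have hpos : (0:ℝ) < (ηh + μh) * μm := by positivity
    constructor
    · intro h; nlinarith [hpos]
    · intro h; nlinarith [hpos]
  refine ⟨htr0, hdetpos, ?_⟩
  rw [← hdetpos]
  have hcp : (J.map (fun x : ℝ => (x : ℂ))).charpoly =
      X ^ 2 - C ((J.trace : ℝ) : ℂ) * X + C ((J.det : ℝ) : ℂ) := by
    rw [Matrix.charpoly, Matrix.det_fin_two]
    rw [Matrix.charmatrix_apply_eq, Matrix.charmatrix_apply_eq,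
      Matrix.charmatrix_apply_ne _ _ _ (by decide : (0 : Fin 2) ≠ 1),
      Matrix.charmatrix_apply_ne _ _ _ (by decide : (1 : Fin 2) ≠ 0)]
    rw [Matrix.trace_fin_two, Matrix.det_fin_two]
    push_cast
    simp only [Matrix.map_apply, map_add, map_mul, map_sub]
    ring
  have hroot : ∀ z : ℂ, (J.map (fun x : ℝ => (x : ℂ))).charpoly.IsRoot z ↔
      z ^ 2 - ((J.trace : ℝ) : ℂ) * z + ((J.det : ℝ) : ℂ) = 0 := by
    intro z
    rw [hcp, Polynomial.IsRoot.def]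
    simp
  constructor
  · intro h
    have := (quad_roots_neg_re J.trace J.det htr0).mp (fun z hz => h z ((hroot z).mpr hz))
    exact this
  · intro hd z hz
    exact (quad_roots_neg_re J.trace J.det htr0).mpr hd z ((hroot z).mp hz)
end
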